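/- Under the same hypotheses on $\nu$ (conditions (H1) with constant $a_1$), for all $0<r_1<r_2<\infty$ one has $\nu(r_1)-\nu(r_2) \le \frac{3}{2}(a_1-1)\,\frac{\nu(r_1)}{1\wedge r_1}\,(r_2-r_1)\left(1+\frac{r_2}{r_1}\right)$. -/
import Mathlib

open MeasureTheory Set

theorem levy_density_difference_bound
    (ν ν' : ℝ → ℝ) (a₁ : ℝ) (ha₁ : 1 ≤ a₁)
    (hpos : ∀ r > (0:ℝ), 0 < ν r)
    (hanti : ∀ u v : ℝ, 0 < u → u ≤ v → ν v ≤ ν u)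
    (habs : ∀ r > (0:ℝ), ν r = -∫ ρ in Set.Ioi r, ν' ρ)
    (hratio : ∀ u v : ℝ, 0 < u → u ≤ v → -ν' v / v ≤ -ν' u / u)
    (hdbl1 : ∀ r : ℝ, 1 ≤ r → ν r ≤ a₁ * ν (r + 1))
    (hdbl2 : ∀ r : ℝ, 0 < r → r ≤ 1 → ν r ≤ a₁ * ν (2 * r)) :
    ∀ r₁ r₂ : ℝ, 0 < r₁ → r₁ < r₂ →
      ν r₁ - ν r₂ ≤ (3 / 2) * (a₁ - 1) * (ν r₁ / min 1 r₁) * (r₂ - r₁) * (1 + r₂ / r₁) := by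
  -- integrability of ν' on Ioi r
  have hint : ∀ r : ℝ, 0 < r → IntegrableOn ν' (Set.Ioi r) := by
    intro r hr
    by_contra h
    have h0 := habs r hr
    rw [MeasureTheory.integral_undef h] at h0
    simp only [neg_zero] at h0
    exact absurd h0 (ne_of_gt (hpos r hr))
  -- difference as integral
  have hdiff : ∀ a b : ℝ, 0 < a → a < b →
      ν a - ν b = ∫ ρ in Set.Ioc a b, (-ν' ρ) := by
    intro a b ha hab
    have hIoi : Set.Ioc a b ∪ Set.Ioi b = Set.Ioi a := Set.Ioc_union_Ioi_eq_Ioi hab.le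
    have h1 : ∫ ρ in Set.Ioi a, ν' ρ
        = (∫ ρ in Set.Ioc a b, ν' ρ) + ∫ ρ in Set.Ioi b, ν' ρ := by
      rw [← hIoi]
      exact MeasureTheory.setIntegral_union (Set.Ioc_disjoint_Ioi le_rfl) measurableSet_Ioi
        ((hint a ha).mono_set Set.Ioc_subset_Ioi_self) (hint b (ha.trans hab))
    rw [habs a ha, habs b (ha.trans hab), h1, MeasureTheory.integral_neg]
    ring
  -- explicit integral
  have hcalc : ∀ (c a b : ℝ), a ≤ b →
      ∫ ρ in Set.Ioc a b, c * ρ = c * (b ^ 2 - a ^ 2) / 2 := by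
    intro c a b hab
    rw [← intervalIntegral.integral_of_le hab, intervalIntegral.integral_const_mul, integral_id]
    ring
  -- lower bound for the difference over [a, u]
  have hlow : ∀ a u : ℝ, 0 < a → a < u →
      (-ν' u / u) * (u ^ 2 - a ^ 2) / 2 ≤ ν a - ν u := by
    intro a u ha hau
    rw [hdiff a u ha hau]
    have : (-ν' u / u) * (u ^ 2 - a ^ 2) / 2
        = ∫ ρ in Set.Ioc a u, (-ν' u / u) * ρ := by
      rw [hcalc _ _ _ hau.le]
    rw [this]
    refine MeasureTheory.setIntegral_mono_on
      ((continuous_const.mul continuous_id).integrableOn_Ioc)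
      (((hint a ha).mono_set Set.Ioc_subset_Ioi_self).neg)
      measurableSet_Ioc ?_
    intro ρ hρ
    have hρ0 : 0 < ρ := ha.trans hρ.1
    have := hratio ρ u hρ0 hρ.2
    calc -ν' u / u * ρ ≤ -ν' ρ / ρ * ρ := by
          exact mul_le_mul_of_nonneg_right this hρ0.le
      _ = -ν' ρ := div_mul_cancel₀ _ hρ0.ne'
  -- upper bound for the difference over [r₁, r₂]
  have hup : ∀ a b : ℝ, 0 < a → a < b →
      ν a - ν b ≤ (-ν' a / a) * (b ^ 2 - a ^ 2) / 2 := by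
    intro a b ha hab
    rw [hdiff a b ha hab]
    have : (-ν' a / a) * (b ^ 2 - a ^ 2) / 2
        = ∫ ρ in Set.Ioc a b, (-ν' a / a) * ρ := by
      rw [hcalc _ _ _ hab.le]
    rw [this]
    refine MeasureTheory.setIntegral_mono_on
      (((hint a ha).mono_set Set.Ioc_subset_Ioi_self).neg)
      ((continuous_const.mul continuous_id).integrableOn_Ioc)
      measurableSet_Ioc ?_
    intro ρ hρ
    have hρ0 : 0 < ρ := ha.trans hρ.1
    have := hratio a ρ ha hρ.1.le
    calc -ν' ρ = -ν' ρ / ρ * ρ := (div_mul_cancel₀ _ hρ0.ne').symm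
      _ ≤ -ν' a / a * ρ := mul_le_mul_of_nonneg_right this hρ0.le
  -- key derivative bound
  have hkey : ∀ u : ℝ, 0 < u → -ν' u ≤ 3 * (a₁ - 1) * ν u / min 1 u := by
    intro u hu
    have hνu : 0 < ν u := hpos u hu
    have hnn : 0 ≤ (a₁ - 1) * ν u := mul_nonneg (by linarith) hνu.le
    rcases le_or_gt u 2 with h2 | h2
    · -- use [u/2, u], doubling2 applies since u/2 ≤ 1
      have hdb := hdbl2 (u / 2) (by linarith) (by linarith)
      rw [show 2 * (u / 2) = u by ring] at hdb
      have h1 : ν (u / 2) - ν u ≤ (a₁ - 1) * ν u := by linarith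
      have h2' := hlow (u / 2) u (by linarith) (by linarith)
      have heq : (-ν' u / u) * (u ^ 2 - (u / 2) ^ 2) / 2 = -ν' u * (3 * u / 8) := by
        field_simp; ring
      rw [heq] at h2'
      have hb : -ν' u * (3 * u / 8) ≤ (a₁ - 1) * ν u := by linarith
      rcases le_or_gt u 1 with h1' | h1'
      · rw [min_eq_right h1', le_div_iff₀ hu]
        linarith
      · rw [min_eq_left h1'.le, div_one]
        rcases le_or_gt (-ν' u) 0 with hs | hs
        · linarith
        · have hmono : 0 ≤ (u - 1) * (-ν' u) := mul_nonneg (by linarith) hs.le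
          nlinarith [hb, hmono, hnn]
    · -- u > 2, use [u-1, u]
      have hdb := hdbl1 (u - 1) (by linarith)
      rw [show u - 1 + 1 = u by ring] at hdb
      have h1 : ν (u - 1) - ν u ≤ (a₁ - 1) * ν u := by linarith
      have h2' := hlow (u - 1) u (by linarith) (by linarith)
      have heq : (-ν' u / u) * (u ^ 2 - (u - 1) ^ 2) / 2
          = -ν' u * (2 * u - 1) / (2 * u) := by
        field_simp; ring
      rw [heq] at h2'
      have hb : -ν' u * (2 * u - 1) / (2 * u) ≤ (a₁ - 1) * ν u := by linarith
      have hb' : -ν' u * (2 * u - 1) ≤ (a₁ - 1) * ν u * (2 * u) := by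
        rwa [div_le_iff₀ (by linarith)] at hb
      rw [min_eq_left (by linarith), div_one]
      rcases le_or_gt (-ν' u) 0 with hs | hs
      · linarith
      · nlinarith [hb', hs, hnn, mul_pos hu hs,
          mul_nonneg (show (0:ℝ) ≤ 4 * u - 3 by linarith) hs.le]
  -- assemble
  intro r₁ r₂ hr₁ hr₁₂
  have hm : 0 < min 1 r₁ := lt_min one_pos hr₁
  have hν₁ : 0 < ν r₁ := hpos r₁ hr₁
  have hmain := hup r₁ r₂ hr₁ hr₁₂
  have hk := hkey r₁ hr₁
  have hsq : 0 ≤ r₂ ^ 2 - r₁ ^ 2 := by nlinarith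
  have hstep : (-ν' r₁ / r₁) * (r₂ ^ 2 - r₁ ^ 2) / 2
      ≤ (3 * (a₁ - 1) * ν r₁ / min 1 r₁ / r₁) * (r₂ ^ 2 - r₁ ^ 2) / 2 := by
    have hdi : -ν' r₁ / r₁ ≤ 3 * (a₁ - 1) * ν r₁ / min 1 r₁ / r₁ :=
      (div_le_div_iff_of_pos_right hr₁).mpr hk
    have := mul_le_mul_of_nonneg_right hdi hsq
    linarith
  have heqR : (3 * (a₁ - 1) * ν r₁ / min 1 r₁ / r₁) * (r₂ ^ 2 - r₁ ^ 2) / 2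
      = (3 / 2) * (a₁ - 1) * (ν r₁ / min 1 r₁) * (r₂ - r₁) * (1 + r₂ / r₁) := by
    field_simp
    ring
  linarith [hmain, hstep, heqR ▸ hstep]
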